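/- Fix n ≥ 3 and ρ* ∈ (0,1)^n. There exist ε₀ > 0 and constants C, K > 0 (depending only on n and ρ*) such that for every ρ ∈ [0,1)^n with ε := max_i |g¹_i − ρ_i| ≤ ε₀, one has F_1(ρ) ≤ ρ_1 − C·(1 − ρ_1)² + K·ε³. -/

import Mathlib

open Finset

/-- Conditional-mean coefficients for the one-latent-node Gaussian tree model. -/
noncomputable def lam (n : ℕ) (ρ : Fin n → ℝ) (j : Fin n) : ℝ :=
  (ρ j / (1 - ρ j ^ 2)) / (1 + ∑ k, ρ k ^ 2 / (1 - ρ k ^ 2))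

/-- Population EM update map `F` for true correlations `ρs`. -/
noncomputable def emF (n : ℕ) (ρs ρ : Fin n → ℝ) (i : Fin n) : ℝ :=
  (ρ i + ∑ j ∈ Finset.univ.erase i, (ρs i * ρs j - ρ i * ρ j) * lam n ρ j) /
    Real.sqrt (1 + ∑ j, ∑ k ∈ Finset.univ.erase j,
      (ρs j * ρs k - ρ j * ρ k) * lam n ρ j * lam n ρ k)

/-- The boundary fixed point `g¹`: first coordinate `1`, and `ρ*_1 ρ*_j` elsewhere. -/
noncomputable def gvec (n : ℕ) (h : 0 < n) (ρs : Fin n → ℝ) : Fin n → ℝ :=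
  fun i => if i = ⟨0, h⟩ then 1 else ρs ⟨0, h⟩ * ρs i

lemma sqrt_quad_lb (x : ℝ) (hx : |x| ≤ 1/2) :
    1 + x/2 - x^2 ≤ Real.sqrt (1+x) := by
  obtain ⟨hx1, hx2⟩ := abs_le.mp hx
  have h0 : (0:ℝ) ≤ 1 + x := by linarith
  rcases le_or_gt (1 + x/2 - x^2) 0 with h | h
  · exact h.trans (Real.sqrt_nonneg _)
  · rw [show (1:ℝ) + x/2 - x^2 = 1 + x/2 - x^2 from rfl]
    rw [← Real.sqrt_sq h.le]
    apply Real.sqrt_le_sqrt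
    nlinarith

set_option maxHeartbeats 2000000 in
/-- Near `g¹`, the update pushes the first coordinate away from `1`:
`F_1(ρ) ≤ ρ_1 − C(1 − ρ_1)² + K ε³` where `ε = max_i |g¹_i − ρ_i|`. -/
theorem em_pushback_near_boundary (n : ℕ) (hn : 3 ≤ n) (ρs : Fin n → ℝ)
    (hρs : ∀ i, ρs i ∈ Set.Ioo (0 : ℝ) 1) :
    ∃ ε₀ > (0 : ℝ), ∃ C > (0 : ℝ), ∃ K > (0 : ℝ), ∀ ρ : Fin n → ℝ,
      (∀ i, ρ i ∈ Set.Ico (0 : ℝ) 1) →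
      (⨆ i, |gvec n (by omega) ρs i - ρ i|) ≤ ε₀ →
      emF n ρs ρ ⟨0, by omega⟩
        ≤ ρ ⟨0, by omega⟩ - C * (1 - ρ ⟨0, by omega⟩) ^ 2 +
          K * (⨆ i, |gvec n (by omega) ρs i - ρ i|) ^ 3 := by
  have hnpos : 0 < n := by omega
  have hne : Nonempty (Fin n) := ⟨⟨0, hnpos⟩⟩
  set i₁ : Fin n := ⟨0, hnpos⟩ with hi₁
  -- uniform bounds on ρs
  obtain ⟨α, β, hαpos, hβlt, hαβ, hα_le, hβ_ge⟩ :
      ∃ α β : ℝ, 0 < α ∧ β < 1 ∧ α ≤ β ∧ (∀ i, α ≤ ρs i) ∧ (∀ i, ρs i ≤ β) := by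
    refine ⟨Finset.univ.inf' Finset.univ_nonempty ρs,
            Finset.univ.sup' Finset.univ_nonempty ρs, ?_, ?_, ?_, ?_, ?_⟩
    · obtain ⟨i, _, hi⟩ := Finset.exists_mem_eq_inf' Finset.univ_nonempty ρs
      rw [hi]; exact (hρs i).1
    · obtain ⟨i, _, hi⟩ := Finset.exists_mem_eq_sup' Finset.univ_nonempty ρs
      rw [hi]; exact (hρs i).2
    · exact le_trans (Finset.inf'_le _ (mem_univ i₁)) (Finset.le_sup' _ (mem_univ i₁))
    · exact fun i => Finset.inf'_le _ (mem_univ i)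
    · exact fun i => Finset.le_sup' _ (mem_univ i)
  have hβpos : 0 < β := lt_of_lt_of_le hαpos hαβ
  -- constants
  set μ : ℝ := (1 - β^2)/2 with hμdef
  have hμpos : 0 < μ := by rw [hμdef]; nlinarith
  set L : ℝ := 2/μ with hLdef
  have hLpos : 0 < L := by positivity
  set A : ℝ := 2*(1 + n/μ) with hAdef
  have hApos : 0 < A := by positivity
  set c : ℝ := α^2/(2*(1 + n/μ)) with hcdef
  have hcpos : 0 < c := by positivity
  set γ : ℝ := α^2*(1 - β^2) with hγdef
  have hγpos : 0 < γ := by rw [hγdef]; exact mul_pos (pow_pos hαpos 2) (by nlinarith)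
  set c₀ : ℝ := γ*c^2/4 with hc₀def
  have hc₀pos : 0 < c₀ := by positivity
  set KS : ℝ := 4*n*L + n^2*L^2 with hKSdef
  have hKSpos : 0 < KS := by
    have : (0:ℝ) < n := by exact_mod_cast hnpos
    rw [hKSdef]; positivity
  set KT : ℝ := 2*n*A*L with hKTdef
  have hKTpos : 0 < KT := by
    have : (0:ℝ) < n := by exact_mod_cast hnpos
    rw [hKTdef]; positivity
  set C : ℝ := c₀/2 with hCdef
  have hCpos : 0 < C := by positivity
  set K : ℝ := 2*(KT + KS^2) with hKdef
  have hKpos : 0 < K := by positivity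
  set ε₀ : ℝ := min (α^2/2) (min ((1-β^2)/2) (min (γ/6) (min (1/2)
      (min (1/(2*KS)) (1/(4*n*L)))))) with hε₀def
  have hnL : (0:ℝ) < 4*n*L := by
    have : (0:ℝ) < n := by exact_mod_cast hnpos
    positivity
  have hε₀pos : 0 < ε₀ := by
    rw [hε₀def]
    refine lt_min (by positivity) (lt_min (by positivity) (lt_min (by positivity)
      (lt_min (by norm_num) (lt_min (by positivity) (by positivity)))))
  refine ⟨ε₀, hε₀pos, C, hCpos, K, hKpos, ?_⟩
  intro ρ hρ hsup
  set g : Fin n → ℝ := gvec n hnpos ρs with hgdef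
  set ε : ℝ := ⨆ i, |g i - ρ i| with hεdef
  have hεε₀ : ε ≤ ε₀ := hsup
  show emF n ρs ρ i₁ ≤ ρ i₁ - C * (1 - ρ i₁) ^ 2 + K * ε ^ 3
  have hεi : ∀ i, |g i - ρ i| ≤ ε := fun i =>
    le_ciSup (f := fun i => |g i - ρ i|) (Set.Finite.bddAbove (Set.finite_range _)) i
  have hg1 : g i₁ = 1 := by rw [hgdef]; simp [gvec]; intro h; exact absurd hi₁ h
  have hgj : ∀ j, j ≠ i₁ → g j = ρs i₁ * ρs j := by
    intro j hj; rw [hgdef]; simp [gvec, hj]; exact if_neg hj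
  set δ : ℝ := 1 - ρ i₁ with hδdef
  have hρ0 : ∀ i, 0 ≤ ρ i := fun i => (hρ i).1
  have hρlt : ∀ i, ρ i < 1 := fun i => (hρ i).2
  have hδ0 : 0 ≤ δ := by rw [hδdef]; linarith [hρlt i₁]
  have hδε : δ ≤ ε := by
    have := hεi i₁
    rwa [hg1, ← hδdef, abs_of_nonneg hδ0] at this
  have hε0 : 0 ≤ ε := le_trans hδ0 hδε
  -- ε₀ component bounds
  have hε₀1 : ε₀ ≤ α^2/2 := min_le_left _ _
  have hε₀2 : ε₀ ≤ (1-β^2)/2 := le_trans (min_le_right _ _) (min_le_left _ _)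
  have hε₀3 : ε₀ ≤ γ/6 := le_trans (min_le_right _ _) (le_trans (min_le_right _ _) (min_le_left _ _))
  have hε₀4 : ε₀ ≤ 1/2 := le_trans (min_le_right _ _) (le_trans (min_le_right _ _)
    (le_trans (min_le_right _ _) (min_le_left _ _)))
  have hε₀5 : ε₀ ≤ 1/(2*KS) := le_trans (min_le_right _ _) (le_trans (min_le_right _ _)
    (le_trans (min_le_right _ _) (le_trans (min_le_right _ _) (min_le_left _ _))))
  have hε₀6 : ε₀ ≤ 1/(4*n*L) := le_trans (min_le_right _ _) (le_trans (min_le_right _ _)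
    (le_trans (min_le_right _ _) (le_trans (min_le_right _ _) (min_le_right _ _))))
  have hε1 : ε ≤ 1 := by linarith
  have hρ1half : 1/2 ≤ ρ i₁ := by
    have : δ ≤ 1/2 := le_trans hδε (le_trans hεε₀ hε₀4)
    rw [hδdef] at this; linarith
  -- bounds on ρ j for j ≠ i₁
  have hab : ∀ j, j ≠ i₁ → α^2 ≤ ρs i₁ * ρs j ∧ ρs i₁ * ρs j ≤ β^2 := by
    intro j hj
    have h1 := hα_le i₁; have h2 := hα_le j
    have h3 := hβ_ge i₁; have h4 := hβ_ge j
    have h5 := (hρs j).1; have h6 := (hρs i₁).1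
    constructor
    · nlinarith only [h1, h2, h3, h4, h5, h6, hαpos]
    · nlinarith only [h1, h2, h3, h4, h5, h6, hαpos, hβpos]
  have hρj_lb : ∀ j, j ≠ i₁ → α^2/2 ≤ ρ j := by
    intro j hj
    have h1 := (abs_le.mp (hεi j)).2
    have h2 := (hab j hj).1
    rw [hgj j hj] at h1
    linarith
  have hρj_ub : ∀ j, j ≠ i₁ → ρ j ≤ β^2 + ε := by
    intro j hj
    have h1 := (abs_le.mp (hεi j)).1
    have h2 := (hab j hj).2
    rw [hgj j hj] at h1
    linarith
  have hμρ : ∀ j, j ≠ i₁ → μ ≤ 1 - (ρ j)^2 := by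
    intro j hj
    have h1 := hρj_ub j hj
    have h2 : ε ≤ (1-β^2)/2 := le_trans hεε₀ hε₀2
    have h3 := hρ0 j
    have h4 := hρlt j
    rw [hμdef]; nlinarith only [h1, h2, h3, h4]
  -- facts about lam
  have h1ρ2 : ∀ k : Fin n, 0 < 1 - ρ k ^ 2 := by
    intro k; nlinarith only [hρ0 k, hρlt k]
  have htermnn : ∀ k : Fin n, 0 ≤ ρ k ^ 2 / (1 - ρ k ^ 2) := by
    intro k; exact div_nonneg (sq_nonneg _) (h1ρ2 k).le
  set D₀ : ℝ := 1 + ∑ k, ρ k ^ 2 / (1 - ρ k ^ 2) with hD₀def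
  have hlam_eq : ∀ j, lam n ρ j = (ρ j / (1 - ρ j ^ 2)) / D₀ := by
    intro j; rw [hD₀def, lam]
  have hD₀1 : 1 ≤ D₀ := by
    rw [hD₀def]
    have : 0 ≤ ∑ k, ρ k ^ 2 / (1 - ρ k ^ 2) := Finset.sum_nonneg fun k _ => htermnn k
    linarith
  have hD₀pos : 0 < D₀ := lt_of_lt_of_le one_pos hD₀1
  have hid1 : 1 / (1 - ρ i₁ ^ 2) = 1 + ρ i₁ ^ 2 / (1 - ρ i₁ ^ 2) := by
    have h := h1ρ2 i₁
    field_simp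
    ring
  have hD₀lb : 1 / (1 - ρ i₁ ^ 2) ≤ D₀ := by
    have hsingle : ρ i₁ ^ 2 / (1 - ρ i₁ ^ 2) ≤ ∑ k, ρ k ^ 2 / (1 - ρ k ^ 2) :=
      Finset.single_le_sum (fun k _ => htermnn k) (mem_univ i₁)
    rw [hid1, hD₀def]; linarith
  have hinvD₀ : 1 / D₀ ≤ 1 - ρ i₁ ^ 2 := by
    have h := one_div_le_one_div_of_le (one_div_pos.mpr (h1ρ2 i₁)) hD₀lb
    rwa [one_div_one_div] at h
  have hcard : ((Finset.univ.erase i₁).card : ℝ) ≤ (n : ℝ) := by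
    have h1 : (Finset.univ.erase i₁).card ≤ (Finset.univ : Finset (Fin n)).card :=
      Finset.card_le_card (Finset.erase_subset _ _)
    have h2 : (Finset.univ : Finset (Fin n)).card = n := by
      rw [Finset.card_univ, Fintype.card_fin]
    exact_mod_cast h2 ▸ h1
  have hD₀ub : D₀ ≤ 1 / (1 - ρ i₁ ^ 2) + n / μ := by
    have hsplit : ∑ k ∈ Finset.univ.erase i₁, ρ k ^ 2 / (1 - ρ k ^ 2)
        + ρ i₁ ^ 2 / (1 - ρ i₁ ^ 2) = ∑ k, ρ k ^ 2 / (1 - ρ k ^ 2) :=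
      Finset.sum_erase_add _ _ (mem_univ i₁)
    have hbd : ∑ k ∈ Finset.univ.erase i₁, ρ k ^ 2 / (1 - ρ k ^ 2)
        ≤ ∑ _k ∈ Finset.univ.erase i₁, 1 / μ := by
      refine Finset.sum_le_sum fun k hk => ?_
      have hkne : k ≠ i₁ := Finset.ne_of_mem_erase hk
      refine div_le_div₀ (by positivity) ?_ hμpos (hμρ k hkne)
      nlinarith only [hρ0 k, hρlt k]
    rw [Finset.sum_const, nsmul_eq_mul] at hbd
    have hbd2 : ∑ k ∈ Finset.univ.erase i₁, ρ k ^ 2 / (1 - ρ k ^ 2) ≤ n / μ := by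
      refine hbd.trans ?_
      rw [div_eq_mul_one_div (n:ℝ) μ]
      exact mul_le_mul_of_nonneg_right hcard (by positivity)
    rw [hD₀def, hid1]; linarith
  have hlam_nn : ∀ j, 0 ≤ lam n ρ j := by
    intro j; rw [hlam_eq j]
    exact div_nonneg (div_nonneg (hρ0 j) (h1ρ2 j).le) hD₀pos.le
  have hu2δ : 1 - ρ i₁ ^ 2 ≤ 2 * δ := by
    rw [hδdef]; nlinarith only [sq_nonneg (1 - ρ i₁)]
  have huδ : δ ≤ 1 - ρ i₁ ^ 2 := by
    rw [hδdef]; nlinarith only [hρ0 i₁, hρlt i₁]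
  have hlam_ub_gen : ∀ j, lam n ρ j ≤ (ρ j / (1 - ρ j ^ 2)) * (1 - ρ i₁ ^ 2) := by
    intro j
    rw [hlam_eq j, div_eq_mul_one_div (ρ j / (1 - ρ j ^ 2)) D₀]
    exact mul_le_mul_of_nonneg_left hinvD₀ (div_nonneg (hρ0 j) (h1ρ2 j).le)
  have hlam1_le_ρ : lam n ρ i₁ ≤ ρ i₁ := by
    have h := hlam_ub_gen i₁
    rwa [div_mul_cancel₀ _ (ne_of_gt (h1ρ2 i₁))] at h
  have hlam1_ub : lam n ρ i₁ ≤ 1 := le_trans hlam1_le_ρ (hρlt i₁).le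
  have hbj_ub : ∀ j, j ≠ i₁ → ρ j / (1 - ρ j ^ 2) ≤ 1 / μ := by
    intro j hj
    exact div_le_div₀ (by norm_num) (hρlt j).le hμpos (hμρ j hj)
  have hlamj_ub : ∀ j, j ≠ i₁ → lam n ρ j ≤ L * δ := by
    intro j hj
    refine (hlam_ub_gen j).trans ?_
    have h1 : (ρ j / (1 - ρ j ^ 2)) * (1 - ρ i₁ ^ 2) ≤ (1/μ) * (2*δ) :=
      mul_le_mul (hbj_ub j hj) hu2δ (by nlinarith only [h1ρ2 i₁, hρ0 i₁, hρlt i₁]) (by positivity)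
    refine h1.trans ?_
    rw [hLdef]; ring_nf; rfl
  have hδ1 : δ ≤ 1 := le_trans hδε hε1
  have hδD₀ : δ * D₀ ≤ 1 + n / μ := by
    have h1 : δ * D₀ ≤ δ * (1 / (1 - ρ i₁ ^ 2) + n / μ) :=
      mul_le_mul_of_nonneg_left hD₀ub hδ0
    have h2 : δ * (1 / (1 - ρ i₁ ^ 2)) ≤ 1 := by
      rw [← div_eq_mul_one_div]
      exact (div_le_one (h1ρ2 i₁)).mpr huδ
    have h3 : δ * (n / μ) ≤ 1 * (n / μ) := by
      have : (0:ℝ) ≤ n / μ := by positivity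
      exact mul_le_mul_of_nonneg_right hδ1 this
    nlinarith only [h1, h2, h3]
  have hlamj_lb : ∀ j, j ≠ i₁ → c * δ ≤ lam n ρ j := by
    intro j hj
    rw [hlam_eq j, le_div_iff₀ hD₀pos]
    have hb : α^2/2 ≤ ρ j / (1 - ρ j ^ 2) := by
      refine (hρj_lb j hj).trans ?_
      rw [le_div_iff₀ (h1ρ2 j)]
      nlinarith only [hρ0 j, hρlt j, sq_nonneg (ρ j)]
    have h2 : c * δ * D₀ = c * (δ * D₀) := by ring
    rw [h2]
    have h3 : c * (δ * D₀) ≤ c * (1 + n/μ) := mul_le_mul_of_nonneg_left hδD₀ hcpos.le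
    have h4 : c * (1 + n/μ) = α^2/2 := by
      rw [hcdef]; field_simp
    linarith
  -- 1 - ρ₁ lam₁ bounds
  have hrl_nn : 0 ≤ 1 - ρ i₁ * lam n ρ i₁ := by
    nlinarith only [hlam1_le_ρ, hρ0 i₁, hρlt i₁, hlam_nn i₁]
  have hrl_ub : 1 - ρ i₁ * lam n ρ i₁ ≤ A * δ := by
    have hq : ρ i₁ * lam n ρ i₁ = (ρ i₁ ^ 2 / (1 - ρ i₁ ^ 2)) / D₀ := by
      rw [hlam_eq i₁]; field_simp
    have hnum_nn : 0 ≤ D₀ - ρ i₁ ^ 2 / (1 - ρ i₁ ^ 2) := by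
      rw [hid1] at hD₀lb; linarith
    have hnum_ub : D₀ - ρ i₁ ^ 2 / (1 - ρ i₁ ^ 2) ≤ 1 + n / μ := by
      rw [hid1] at hD₀ub; linarith
    have heq : 1 - ρ i₁ * lam n ρ i₁ = (D₀ - ρ i₁ ^ 2 / (1 - ρ i₁ ^ 2)) * (1 / D₀) := by
      rw [hq]
      have h1 := ne_of_gt (h1ρ2 i₁); have h2 := ne_of_gt hD₀pos
      field_simp
    rw [heq]
    have h5 : (D₀ - ρ i₁ ^ 2 / (1 - ρ i₁ ^ 2)) * (1 / D₀)
        ≤ (D₀ - ρ i₁ ^ 2 / (1 - ρ i₁ ^ 2)) * (1 - ρ i₁ ^ 2) :=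
      mul_le_mul_of_nonneg_left hinvD₀ hnum_nn
    refine h5.trans ?_
    have h6 : (D₀ - ρ i₁ ^ 2 / (1 - ρ i₁ ^ 2)) * (1 - ρ i₁ ^ 2) ≤ (1 + n/μ) * (2*δ) :=
      mul_le_mul hnum_ub hu2δ (by nlinarith only [h1ρ2 i₁]) (by positivity)
    refine h6.trans ?_
    rw [hAdef]; ring_nf; rfl
  -- the sums
  set T1 : ℝ := ∑ j ∈ Finset.univ.erase i₁, (ρs i₁ * ρs j - ρ i₁ * ρ j) * lam n ρ j
    with hT1def
  set S : ℝ := ∑ j, ∑ k ∈ Finset.univ.erase j,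
      (ρs j * ρs k - ρ j * ρ k) * lam n ρ j * lam n ρ k with hSdef
  have hemF : emF n ρs ρ i₁ = (ρ i₁ + T1) / Real.sqrt (1 + S) := by
    rw [hT1def, hSdef]; rfl
  clear_value μ L A c γ c₀ KS KT C K ε₀ g ε δ D₀ T1 S
  set S1 : ℝ := ∑ j ∈ Finset.univ.erase i₁,
      (ρs i₁ * ρs j - ρ i₁ * ρ j) * lam n ρ j * lam n ρ i₁ with hS1def
  set S2 : ℝ := ∑ j ∈ Finset.univ.erase i₁, ∑ k ∈ (Finset.univ.erase i₁).erase j,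
      (ρs j * ρs k - ρ j * ρ k) * lam n ρ j * lam n ρ k with hS2def
  clear_value S1 S2
  have hSsplit : S = 2 * S1 + S2 := by
    rw [hSdef, ← Finset.sum_erase_add Finset.univ _ (mem_univ i₁)]
    have hinner : ∀ j ∈ Finset.univ.erase i₁,
        (∑ k ∈ Finset.univ.erase j, (ρs j * ρs k - ρ j * ρ k) * lam n ρ j * lam n ρ k)
        = (∑ k ∈ (Finset.univ.erase i₁).erase j,
            (ρs j * ρs k - ρ j * ρ k) * lam n ρ j * lam n ρ k)
          + (ρs j * ρs i₁ - ρ j * ρ i₁) * lam n ρ j * lam n ρ i₁ := by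
      intro j hj
      have hji : j ≠ i₁ := Finset.ne_of_mem_erase hj
      rw [← Finset.sum_erase_add (Finset.univ.erase j) _
        (Finset.mem_erase.mpr ⟨Ne.symm hji, mem_univ i₁⟩), Finset.erase_right_comm]
    rw [Finset.sum_congr rfl hinner, Finset.sum_add_distrib]
    have e1 : ∑ j ∈ Finset.univ.erase i₁,
        (ρs j * ρs i₁ - ρ j * ρ i₁) * lam n ρ j * lam n ρ i₁ = S1 := by
      rw [hS1def]; exact Finset.sum_congr rfl fun j _ => by ring
    have e2 : ∑ k ∈ Finset.univ.erase i₁,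
        (ρs i₁ * ρs k - ρ i₁ * ρ k) * lam n ρ i₁ * lam n ρ k = S1 := by
      rw [hS1def]; exact Finset.sum_congr rfl fun k _ => by ring
    rw [e1, e2, ← hS2def]; ring
  -- bound on the linear coefficients
  have hd_bound : ∀ j, j ≠ i₁ → |ρs i₁ * ρs j - ρ i₁ * ρ j| ≤ 2 * ε := by
    intro j hj
    have h1 : ρs i₁ * ρs j - ρ i₁ * ρ j = (g j - ρ j) + ρ j * δ := by
      rw [hgj j hj, hδdef]; ring
    rw [h1]
    have h2 : |ρ j * δ| ≤ δ := by
      rw [abs_of_nonneg (mul_nonneg (hρ0 j) hδ0)]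
      nlinarith only [hρlt j, hρ0 j, hδ0]
    calc |(g j - ρ j) + ρ j * δ| ≤ |g j - ρ j| + |ρ j * δ| := abs_add_le _ _
      _ ≤ ε + δ := add_le_add (hεi j) h2
      _ ≤ 2 * ε := by linarith
  have habs_lamj : ∀ j, j ≠ i₁ → |lam n ρ j| ≤ L * δ := by
    intro j hj; rw [abs_of_nonneg (hlam_nn j)]; exact hlamj_ub j hj
  have hT1_bound : |T1| ≤ 2 * n * L * (ε * δ) := by
    calc |T1| ≤ ∑ j ∈ Finset.univ.erase i₁,
        |(ρs i₁ * ρs j - ρ i₁ * ρ j) * lam n ρ j| := by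
          rw [hT1def]; exact Finset.abs_sum_le_sum_abs _ _
      _ ≤ ∑ _j ∈ Finset.univ.erase i₁, (2 * ε) * (L * δ) := by
          refine Finset.sum_le_sum fun j hj => ?_
          have hj' := Finset.ne_of_mem_erase hj
          rw [abs_mul]
          exact mul_le_mul (hd_bound j hj') (habs_lamj j hj') (abs_nonneg _)
            (by positivity)
      _ = ((Finset.univ.erase i₁).card : ℝ) * ((2 * ε) * (L * δ)) := by
          rw [Finset.sum_const, nsmul_eq_mul]
      _ ≤ (n : ℝ) * ((2 * ε) * (L * δ)) :=
          mul_le_mul_of_nonneg_right hcard (by positivity)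
      _ = 2 * n * L * (ε * δ) := by ring
  have hS1_bound : |S1| ≤ 2 * n * L * (ε * δ) := by
    calc |S1| ≤ ∑ j ∈ Finset.univ.erase i₁,
        |(ρs i₁ * ρs j - ρ i₁ * ρ j) * lam n ρ j * lam n ρ i₁| := by
          rw [hS1def]; exact Finset.abs_sum_le_sum_abs _ _
      _ ≤ ∑ _j ∈ Finset.univ.erase i₁, (2 * ε) * (L * δ) := by
          refine Finset.sum_le_sum fun j hj => ?_
          have hj' := Finset.ne_of_mem_erase hj
          rw [abs_mul, abs_mul]
          have h1 : |ρs i₁ * ρs j - ρ i₁ * ρ j| * |lam n ρ j| ≤ (2 * ε) * (L * δ) :=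
            mul_le_mul (hd_bound j hj') (habs_lamj j hj') (abs_nonneg _) (by positivity)
          have h2 : |lam n ρ i₁| ≤ 1 := by
            rw [abs_of_nonneg (hlam_nn i₁)]; exact hlam1_ub
          calc |ρs i₁ * ρs j - ρ i₁ * ρ j| * |lam n ρ j| * |lam n ρ i₁|
              ≤ |ρs i₁ * ρs j - ρ i₁ * ρ j| * |lam n ρ j| * 1 :=
                mul_le_mul_of_nonneg_left h2 (by positivity)
            _ = |ρs i₁ * ρs j - ρ i₁ * ρ j| * |lam n ρ j| := by ring
            _ ≤ (2 * ε) * (L * δ) := h1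
      _ = ((Finset.univ.erase i₁).card : ℝ) * ((2 * ε) * (L * δ)) := by
          rw [Finset.sum_const, nsmul_eq_mul]
      _ ≤ (n : ℝ) * ((2 * ε) * (L * δ)) :=
          mul_le_mul_of_nonneg_right hcard (by positivity)
      _ = 2 * n * L * (ε * δ) := by ring
  -- error term
  have herr_eq : T1 - ρ i₁ * S1 = ∑ j ∈ Finset.univ.erase i₁,
      (ρs i₁ * ρs j - ρ i₁ * ρ j) * lam n ρ j * (1 - ρ i₁ * lam n ρ i₁) := by
    rw [hT1def, hS1def, Finset.mul_sum, ← Finset.sum_sub_distrib]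
    exact Finset.sum_congr rfl fun j _ => by ring
  have herr : |T1 - ρ i₁ * S1| ≤ KT * (ε * δ ^ 2) := by
    rw [herr_eq]
    calc |∑ j ∈ Finset.univ.erase i₁,
        (ρs i₁ * ρs j - ρ i₁ * ρ j) * lam n ρ j * (1 - ρ i₁ * lam n ρ i₁)|
        ≤ ∑ j ∈ Finset.univ.erase i₁,
          |(ρs i₁ * ρs j - ρ i₁ * ρ j) * lam n ρ j * (1 - ρ i₁ * lam n ρ i₁)| :=
          Finset.abs_sum_le_sum_abs _ _
      _ ≤ ∑ _j ∈ Finset.univ.erase i₁, (2 * ε) * (L * δ) * (A * δ) := by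
          refine Finset.sum_le_sum fun j hj => ?_
          have hj' := Finset.ne_of_mem_erase hj
          rw [abs_mul]
          have h1 : |(ρs i₁ * ρs j - ρ i₁ * ρ j) * lam n ρ j| ≤ (2 * ε) * (L * δ) := by
            rw [abs_mul]
            exact mul_le_mul (hd_bound j hj') (habs_lamj j hj') (abs_nonneg _) (by positivity)
          have h2 : |1 - ρ i₁ * lam n ρ i₁| ≤ A * δ := by
            rw [abs_of_nonneg hrl_nn]; exact hrl_ub
          exact mul_le_mul h1 h2 (abs_nonneg _) (by positivity)
      _ = ((Finset.univ.erase i₁).card : ℝ) * ((2 * ε) * (L * δ) * (A * δ)) := by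
          rw [Finset.sum_const, nsmul_eq_mul]
      _ ≤ (n : ℝ) * ((2 * ε) * (L * δ) * (A * δ)) :=
          mul_le_mul_of_nonneg_right hcard (by positivity)
      _ = (2 * n * A * L) * (ε * δ ^ 2) := by ring
      _ = KT * (ε * δ ^ 2) := by rw [hKTdef]
  -- lower bound on cross coefficients
  have hεγ : ε ≤ γ / 6 := le_trans hεε₀ hε₀3
  have hγ2 : ∀ j, j ≠ i₁ → ∀ k, k ≠ i₁ → γ / 2 ≤ ρs j * ρs k - ρ j * ρ k := by
    intro j hj k hk
    have hbj : ρ j ≤ ρs i₁ * ρs j + ε := by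
      have := (abs_le.mp (hεi j)).1; rw [hgj j hj] at this; linarith
    have hbk : ρ k ≤ ρs i₁ * ρs k + ε := by
      have := (abs_le.mp (hεi k)).1; rw [hgj k hk] at this; linarith
    have hjb := (hab j hj); have hkb := (hab k hk)
    have hp0j : 0 ≤ ρs i₁ * ρs j + ε := by nlinarith only [hjb.1, hε0, sq_nonneg α, hαpos]
    have p1 : ρ j * ρ k ≤ (ρs i₁ * ρs j + ε) * (ρs i₁ * ρs k + ε) :=
      mul_le_mul hbj hbk (hρ0 k) hp0j
    have p2 : (ρs i₁ * ρs j + ε) * (ρs i₁ * ρs k + ε)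
        ≤ ρs i₁ ^ 2 * (ρs j * ρs k) + 3 * ε := by
      have m1 : ρs i₁ * ρs j ≤ 1 := by nlinarith only [hjb.2, hβlt, hβpos]
      have m2 : ρs i₁ * ρs k ≤ 1 := by nlinarith only [hkb.2, hβlt, hβpos]
      nlinarith only [m1, m2, hε0, hε1]
    have q1 : α ^ 2 ≤ ρs j * ρs k := by
      nlinarith only [hα_le j, hα_le k, hαpos]
    have q2 : 1 - β ^ 2 ≤ 1 - ρs i₁ ^ 2 := by
      nlinarith only [hβ_ge i₁, (hρs i₁).1]
    have p3 : γ ≤ ρs j * ρs k * (1 - ρs i₁ ^ 2) := by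
      have r0 : (0:ℝ) ≤ 1 - ρs i₁ ^ 2 := by nlinarith only [(hρs i₁).1, (hρs i₁).2]
      have r1 : α^2*(1-β^2) ≤ α^2*(1-ρs i₁^2) := mul_le_mul_of_nonneg_left q2 (sq_nonneg α)
      have r2 : α^2*(1-ρs i₁^2) ≤ (ρs j*ρs k)*(1-ρs i₁^2) :=
        mul_le_mul_of_nonneg_right q1 r0
      rw [hγdef]; linarith
    nlinarith only [p1, p2, p3, hεγ, hγpos]
  -- lower bound for S2
  have hi₂ : (⟨1, by omega⟩ : Fin n) ≠ i₁ := by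
    rw [hi₁]; intro h; exact absurd (Fin.mk.inj_iff.mp h) one_ne_zero
  have hi₃ : (⟨2, by omega⟩ : Fin n) ≠ i₁ := by
    rw [hi₁]; intro h; exact absurd (Fin.mk.inj_iff.mp h) two_ne_zero
  have hi₂₃ : (⟨2, by omega⟩ : Fin n) ≠ (⟨1, by omega⟩ : Fin n) := by
    intro h; exact absurd (Fin.mk.inj_iff.mp h) (by norm_num)
  set i₂ : Fin n := ⟨1, by omega⟩ with hi₂def
  set i₃ : Fin n := ⟨2, by omega⟩ with hi₃def
  clear_value i₂ i₃
  have hterm_nn : ∀ j, j ≠ i₁ → ∀ k, k ≠ i₁ →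
      0 ≤ (ρs j * ρs k - ρ j * ρ k) * lam n ρ j * lam n ρ k := by
    intro j hj k hk
    have h1 := hγ2 j hj k hk
    have h2 : 0 ≤ ρs j * ρs k - ρ j * ρ k := le_trans (by positivity) h1
    exact mul_nonneg (mul_nonneg h2 (hlam_nn j)) (hlam_nn k)
  have hw_lb : ∀ j, j ≠ i₁ → ∀ k, k ≠ i₁ →
      γ / 2 * ((c * δ) * (c * δ)) ≤ (ρs j * ρs k - ρ j * ρ k) * lam n ρ j * lam n ρ k := by
    intro j hj k hk
    have l2 := hlamj_lb j hj
    have l3 := hlamj_lb k hk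
    have hcδ : 0 ≤ c * δ := by positivity
    have m1 : (c * δ) * (c * δ) ≤ lam n ρ j * lam n ρ k :=
      mul_le_mul l2 l3 hcδ (hlam_nn j)
    have h1 := hγ2 j hj k hk
    have h2 : 0 ≤ ρs j * ρs k - ρ j * ρ k := le_trans (by positivity) h1
    calc γ / 2 * ((c * δ) * (c * δ)) ≤ (ρs j * ρs k - ρ j * ρ k) * (lam n ρ j * lam n ρ k) :=
          mul_le_mul h1 m1 (by positivity) h2
      _ = (ρs j * ρs k - ρ j * ρ k) * lam n ρ j * lam n ρ k := by ring
  have hinner_nn : ∀ j, j ≠ i₁ →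
      0 ≤ ∑ k ∈ (Finset.univ.erase i₁).erase j,
        (ρs j * ρs k - ρ j * ρ k) * lam n ρ j * lam n ρ k := by
    intro j hj
    refine Finset.sum_nonneg fun k hk => ?_
    exact hterm_nn j hj k (Finset.ne_of_mem_erase (Finset.mem_of_mem_erase hk))
  have hinner_lb : ∀ j, j ≠ i₁ → ∀ k₀, k₀ ≠ i₁ → k₀ ≠ j →
      γ / 2 * ((c * δ) * (c * δ)) ≤ ∑ k ∈ (Finset.univ.erase i₁).erase j,
        (ρs j * ρs k - ρ j * ρ k) * lam n ρ j * lam n ρ k := by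
    intro j hj k₀ hk₀ hk₀j
    have hmem : k₀ ∈ (Finset.univ.erase i₁).erase j :=
      Finset.mem_erase.mpr ⟨hk₀j, Finset.mem_erase.mpr ⟨hk₀, mem_univ k₀⟩⟩
    refine le_trans (hw_lb j hj k₀ hk₀) ?_
    exact Finset.single_le_sum (fun k hk =>
      hterm_nn j hj k (Finset.ne_of_mem_erase (Finset.mem_of_mem_erase hk))) hmem
  have hS2_lb : γ * (c ^ 2 * δ ^ 2) ≤ S2 := by
    have hsub : ({i₂, i₃} : Finset (Fin n)) ⊆ Finset.univ.erase i₁ := by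
      intro x hx
      rcases Finset.mem_insert.mp hx with h | h
      · exact Finset.mem_erase.mpr ⟨h ▸ hi₂, mem_univ _⟩
      · rw [Finset.mem_singleton] at h
        exact Finset.mem_erase.mpr ⟨h ▸ hi₃, mem_univ _⟩
    have hpair : ∑ j ∈ ({i₂, i₃} : Finset (Fin n)),
        (∑ k ∈ (Finset.univ.erase i₁).erase j,
          (ρs j * ρs k - ρ j * ρ k) * lam n ρ j * lam n ρ k) ≤ S2 := by
      rw [hS2def]
      refine Finset.sum_le_sum_of_subset_of_nonneg hsub fun j hj _ => ?_
      exact hinner_nn j (Finset.ne_of_mem_erase hj)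
    rw [Finset.sum_pair (Ne.symm hi₂₃)] at hpair
    have h2 := hinner_lb i₂ hi₂ i₃ hi₃ hi₂₃
    have h3 := hinner_lb i₃ hi₃ i₂ hi₂ (Ne.symm hi₂₃)
    calc γ * (c ^ 2 * δ ^ 2)
        = γ / 2 * ((c * δ) * (c * δ)) + γ / 2 * ((c * δ) * (c * δ)) := by ring
      _ ≤ _ + _ := add_le_add h2 h3
      _ ≤ S2 := hpair
  have hS2nn : 0 ≤ S2 := le_trans (by positivity) hS2_lb
  -- upper bound for S2
  have hcoef_abs : ∀ j k : Fin n, |ρs j * ρs k - ρ j * ρ k| ≤ 1 := by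
    intro j k
    have h1 : 0 ≤ ρs j * ρs k := mul_nonneg (hρs j).1.le (hρs k).1.le
    have h2 : ρs j * ρs k ≤ 1 := by nlinarith only [(hρs j).1, (hρs j).2, (hρs k).1, (hρs k).2]
    have h3 : 0 ≤ ρ j * ρ k := mul_nonneg (hρ0 j) (hρ0 k)
    have h4 : ρ j * ρ k ≤ 1 := by nlinarith only [hρ0 j, hρlt j, hρ0 k, hρlt k]
    rw [abs_le]; constructor <;> linarith
  have hS2_ub : |S2| ≤ (n : ℝ) ^ 2 * L ^ 2 * δ ^ 2 := by
    calc |S2| ≤ ∑ j ∈ Finset.univ.erase i₁,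
        |∑ k ∈ (Finset.univ.erase i₁).erase j,
          (ρs j * ρs k - ρ j * ρ k) * lam n ρ j * lam n ρ k| := by
          rw [hS2def]; exact Finset.abs_sum_le_sum_abs _ _
      _ ≤ ∑ _j ∈ Finset.univ.erase i₁, (n : ℝ) * ((L * δ) * (L * δ)) := by
          refine Finset.sum_le_sum fun j hj => ?_
          have hj' := Finset.ne_of_mem_erase hj
          calc |∑ k ∈ (Finset.univ.erase i₁).erase j,
              (ρs j * ρs k - ρ j * ρ k) * lam n ρ j * lam n ρ k|
              ≤ ∑ k ∈ (Finset.univ.erase i₁).erase j,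
                |(ρs j * ρs k - ρ j * ρ k) * lam n ρ j * lam n ρ k| :=
                Finset.abs_sum_le_sum_abs _ _
            _ ≤ ∑ k ∈ (Finset.univ.erase i₁).erase j, ((1 : ℝ) * (L * δ)) * (L * δ) := by
                refine Finset.sum_le_sum fun k hk => ?_
                have hk' := Finset.ne_of_mem_erase (Finset.mem_of_mem_erase hk)
                rw [abs_mul, abs_mul]
                refine mul_le_mul (mul_le_mul (hcoef_abs j k) (habs_lamj j hj')
                  (abs_nonneg _) (by norm_num)) (habs_lamj k hk') (abs_nonneg _) (by positivity)
            _ = (((Finset.univ.erase i₁).erase j).card : ℝ) * ((1 * (L * δ)) * (L * δ)) := by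
                rw [Finset.sum_const, nsmul_eq_mul]
            _ ≤ (n : ℝ) * ((1 * (L * δ)) * (L * δ)) := by
                refine mul_le_mul_of_nonneg_right ?_ (by positivity)
                have h1 : ((Finset.univ.erase i₁).erase j).card
                    ≤ (Finset.univ : Finset (Fin n)).card :=
                  Finset.card_le_card (le_trans (Finset.erase_subset _ _)
                    (Finset.erase_subset _ _))
                have h2 : (Finset.univ : Finset (Fin n)).card = n := by
                  rw [Finset.card_univ, Fintype.card_fin]
                exact_mod_cast h2 ▸ h1
            _ = (n : ℝ) * ((L * δ) * (L * δ)) := by ring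
      _ = ((Finset.univ.erase i₁).card : ℝ) * ((n : ℝ) * ((L * δ) * (L * δ))) := by
          rw [Finset.sum_const, nsmul_eq_mul]
      _ ≤ (n : ℝ) * ((n : ℝ) * ((L * δ) * (L * δ))) := by
          refine mul_le_mul_of_nonneg_right hcard (by positivity)
      _ = (n : ℝ) ^ 2 * L ^ 2 * δ ^ 2 := by ring
  -- bound on S
  have hS_bound : |S| ≤ KS * (ε * δ) := by
    have h1 : |S| ≤ 2 * |S1| + |S2| := by
      rw [hSsplit]
      calc |2 * S1 + S2| ≤ |2 * S1| + |S2| := abs_add_le _ _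
        _ = 2 * |S1| + |S2| := by rw [abs_mul]; norm_num
    have h2 : (n : ℝ) ^ 2 * L ^ 2 * δ ^ 2 ≤ (n : ℝ) ^ 2 * L ^ 2 * (ε * δ) := by
      have : δ ^ 2 ≤ ε * δ := by nlinarith only [hδε, hδ0]
      refine mul_le_mul_of_nonneg_left this (by positivity)
    rw [hKSdef]
    nlinarith only [h1, h2, hT1_bound, hS1_bound, hS2_ub]
  have hεδ : ε * δ ≤ ε₀ * ε₀ :=
    mul_le_mul hεε₀ (le_trans hδε hεε₀) hδ0 (le_trans hε0 hεε₀)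
  have hShalf : |S| ≤ 1 / 2 := by
    have h1 : KS * (ε * δ) ≤ KS * (ε₀ * ε₀) := mul_le_mul_of_nonneg_left hεδ hKSpos.le
    have h2 : ε₀ * ε₀ ≤ 1 * (1 / (2 * KS)) :=
      mul_le_mul (by linarith) hε₀5 hε₀pos.le (by norm_num)
    have h3 : KS * (1 * (1 / (2 * KS))) = 1 / 2 := by
      field_simp
    have h4 : KS * (ε₀ * ε₀) ≤ KS * (1 * (1 / (2 * KS))) :=
      mul_le_mul_of_nonneg_left h2 hKSpos.le
    linarith [hS_bound, h1, h4, h3]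
  -- numerator is bounded below
  have hnR : (0:ℝ) < n := by exact_mod_cast hnpos
  have hN_lb : 1/4 ≤ ρ i₁ + T1 := by
    have h3 : ε₀ * ε₀ ≤ (1/2) * (1/(4*n*L)) :=
      mul_le_mul hε₀4 hε₀6 hε₀pos.le (by norm_num)
    have h4 : 2*(n:ℝ)*L*((1/2)*(1/(4*n*L))) = 1/4 := by
      field_simp
    have h5 : 2*(n:ℝ)*L*(ε*δ) ≤ 2*(n:ℝ)*L*((1/2)*(1/(4*n*L))) :=
      mul_le_mul_of_nonneg_left (le_trans hεδ h3) (by positivity)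
    have h6 := neg_abs_le T1
    linarith [hρ1half, hT1_bound]
  have hN0 : 0 ≤ ρ i₁ + T1 := by linarith
  -- square-root lower bound
  set P : ℝ := 1 + S/2 - S^2 with hPdef
  clear_value P
  have hSl := abs_le.mp hShalf
  have hP_lb : 1/2 ≤ P := by rw [hPdef]; nlinarith only [hSl.1, hSl.2]
  have hP_ub : P ≤ 2 := by rw [hPdef]; nlinarith only [hSl.1, hSl.2, sq_nonneg S]
  have hPpos : 0 < P := by linarith
  have hsqrtP : P ≤ Real.sqrt (1+S) := hPdef ▸ sqrt_quad_lb S hShalf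
  -- cubic error bounds
  have hεδ2 : ε*δ^2 ≤ ε^3 := by
    nlinarith only [mul_nonneg (mul_nonneg hε0 (sub_nonneg.mpr hδε)) (add_nonneg hε0 hδ0)]
  have herr3 : T1 - ρ i₁*S1 ≤ KT*ε^3 := by
    have h1 := (le_abs_self (T1 - ρ i₁*S1)).trans herr
    have h2 : KT*(ε*δ^2) ≤ KT*ε^3 := mul_le_mul_of_nonneg_left hεδ2 hKTpos.le
    linarith
  have hδ2ε : δ^2 ≤ ε := by
    nlinarith only [hδε, mul_nonneg hδ0 (sub_nonneg.mpr hδ1)]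
  have hS23 : ρ i₁*S^2 ≤ KS^2*ε^3 := by
    have hSle := abs_le.mp hS_bound
    have h1 : S^2 ≤ (KS*(ε*δ))^2 := by nlinarith only [hSle.1, hSle.2]
    have h2 : KS^2*ε^2*δ^2 ≤ KS^2*ε^2*ε :=
      mul_le_mul_of_nonneg_left hδ2ε (by positivity)
    have h3 : ρ i₁*S^2 ≤ S^2 := by
      nlinarith only [hρlt i₁, sq_nonneg S, hρ0 i₁]
    nlinarith only [h1, h2, h3]
  have hq3 : (KT + KS^2)*ε^3 ≤ K*ε^3*P := by
    have hX : 0 ≤ (KT + KS^2)*ε^3 := by positivity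
    rw [hKdef]
    nlinarith only [hX, hP_lb]
  have hq4 : C*δ^2*P ≤ c₀*δ^2 := by
    rw [hCdef]
    nlinarith only [hP_ub, mul_nonneg hc₀pos.le (sq_nonneg δ), hP_lb]
  have hq5 : c₀*δ^2 ≤ ρ i₁*S2/2 := by
    have h0 : 0 ≤ (ρ i₁ - 1/2)*S2 := mul_nonneg (by linarith) hS2nn
    rw [hc₀def]
    nlinarith only [h0, hS2_lb]
  -- final key inequality
  have hkey : ρ i₁ + T1 ≤ (ρ i₁ - C*δ^2 + K*ε^3) * P := by
    have hNid : ρ i₁ + T1 = ρ i₁ + ρ i₁*(S - S2)/2 + (T1 - ρ i₁*S1) := by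
      rw [hSsplit]; ring
    have hexp : (ρ i₁ - C*δ^2 + K*ε^3)*P
        = ρ i₁ + ρ i₁*S/2 - ρ i₁*S^2 + K*ε^3*P - C*δ^2*P := by
      rw [hPdef]; ring
    rw [hNid, hexp]
    linarith [herr3, hS23, hq3, hq4, hq5]
  have hsq_pos : 0 < Real.sqrt (1+S) := lt_of_lt_of_le hPpos hsqrtP
  calc emF n ρs ρ i₁ = (ρ i₁ + T1)/Real.sqrt (1+S) := hemF
    _ ≤ (ρ i₁ + T1)/P := div_le_div_of_nonneg_left hN0 hPpos hsqrtP
    _ ≤ ρ i₁ - C*δ^2 + K*ε^3 := (div_le_iff₀ hPpos).mpr hkey
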